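/- Let n ≥ 2 and m ≥ n−1. Define vectors in ℝ^m: for 1 ≤ k ≤ n−1, let v_k have k-th coordinate n, coordinates 0 in positions 1 to n−1 other than k, and 1 in positions n to m; let v_n = (1,...,1,0,...,0) with 1 in the first n−1 coordinates and 0 afterwards. Then v_n is coordinatewise strictly dominated by the uniform convex combination of v_1, ..., v_{n−1}, but v_n is not coordinatewise strictly dominated by any convex combination of a proper subset of {v_1, ..., v_{n−1}}. -/
import Mathlib


open Finset

theorem stmt_17 (n m : ℕ) (hn : 2 ≤ n) (hm : n - 1 ≤ m)
    (v : Fin n → Fin m → ℝ)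
    (hv : ∀ (k : Fin n) (j : Fin m),
      v k j = if (k : ℕ) < n - 1 then
          (if (j : ℕ) = (k : ℕ) then (n : ℝ) else if (j : ℕ) < n - 1 then 0 else 1)
        else (if (j : ℕ) < n - 1 then 1 else 0)) :
    (∀ j, v ⟨n - 1, by omega⟩ j <
        ∑ k ∈ Finset.univ.filter (fun k : Fin n => (k : ℕ) < n - 1),
          (1 / ((n : ℝ) - 1)) * v k j) ∧
    ¬ ∃ (S : Finset (Fin n)) (mu : Fin n → ℝ),
        S ⊂ Finset.univ.filter (fun k : Fin n => (k : ℕ) < n - 1) ∧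
        (∀ k ∈ S, 0 ≤ mu k) ∧ ∑ k ∈ S, mu k = 1 ∧
        ∀ j, v ⟨n - 1, by omega⟩ j < ∑ k ∈ S, mu k * v k j := by
  have hnR : (2:ℝ) ≤ (n:ℝ) := by exact_mod_cast hn
  have hvn : ∀ j : Fin m, v ⟨n - 1, by omega⟩ j = if (j:ℕ) < n - 1 then 1 else 0 := by
    intro j; rw [hv]; simp
  constructor
  · intro j
    rw [hvn]
    by_cases hj : (j:ℕ) < n - 1
    · have hsum : ∑ k ∈ Finset.univ.filter (fun k : Fin n => (k:ℕ) < n-1),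
          (1/((n:ℝ)-1)) * v k j = (1/((n:ℝ)-1)) * n := by
        rw [Finset.sum_eq_single (⟨(j:ℕ), by omega⟩ : Fin n)]
        · rw [hv]; simp [hj]
        · intro k hk hne
          simp only [Finset.mem_filter] at hk
          have hne' : (j:ℕ) ≠ (k:ℕ) := fun h => hne (Fin.ext (by simp [← h]))
          rw [hv]; simp [hk.2, hne', hj]
        · intro h
          exfalso; apply h
          simp only [Finset.mem_filter, Finset.mem_univ, true_and]
          exact hj
      rw [hsum]
      simp only [hj, if_true]
      rw [div_mul_eq_mul_div, one_mul, lt_div_iff₀ (by linarith)]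
      linarith
    · have hsum : ∑ k ∈ Finset.univ.filter (fun k : Fin n => (k:ℕ) < n-1),
          (1/((n:ℝ)-1)) * v k j = (Finset.univ.filter (fun k : Fin n => (k:ℕ) < n-1)).card * (1/((n:ℝ)-1)) := by
        rw [Finset.sum_congr rfl (fun k hk => ?_), Finset.sum_const, nsmul_eq_mul]
        simp only [Finset.mem_filter] at hk
        have hne' : (j:ℕ) ≠ (k:ℕ) := by omega
        rw [hv]; simp [hk.2, hne', hj]
      have hcard : (Finset.univ.filter (fun k : Fin n => (k:ℕ) < n-1)).card = n - 1 := by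
        have : Finset.univ.filter (fun k : Fin n => (k:ℕ) < n-1) = Finset.Iio (⟨n-1, by omega⟩ : Fin n) := by
          ext k; simp [Fin.lt_def]
        rw [this, Fin.card_Iio]
      rw [hsum, hcard]
      have h1 : ((n:ℝ) - 1) ≠ 0 := by linarith
      have hcast : ((n - 1 : ℕ) : ℝ) = (n:ℝ) - 1 := by
        have : 1 ≤ n := by omega
        push_cast [this]; ring
      rw [hcast]
      simp only [hj, if_false]
      rw [mul_one_div, div_self h1]
      norm_num
  · rintro ⟨S, mu, hSsub, hmu0, hmu1, hdom⟩
    obtain ⟨k0, hk0f, hk0S⟩ := Finset.exists_of_ssubset hSsub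
    simp only [Finset.mem_filter, Finset.mem_univ, true_and] at hk0f
    set j : Fin m := ⟨(k0:ℕ), by omega⟩ with hjdef
    have hd := hdom j
    rw [hvn] at hd
    have hj : (j:ℕ) < n - 1 := hk0f
    have hsum0 : ∑ k ∈ S, mu k * v k j = 0 := by
      apply Finset.sum_eq_zero
      intro k hk
      have hkf : (k:ℕ) < n - 1 := by
        have := hSsub.1 hk
        simp only [Finset.mem_filter] at this
        exact this.2
      have hne' : (j:ℕ) ≠ (k:ℕ) := by
        intro h
        apply hk0S
        have : k0 = k := by ext; simpa [hjdef] using h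
        rwa [this]
      rw [hv]; simp [hkf, hne', hj]
    rw [hsum0] at hd
    simp only [hj, if_true] at hd
    linarith
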